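/- Let R be a Noetherian F-finite commutative ring of characteristic p, let (M,C) be an F-pure q-Cartier module over R and let f ∈ R. Assume M = M_{f!}. Then for every real t ≥ 0 there exists ε > 0 such that τ(M,f^s) = τ(M,f^t) for all real s with t ≤ s < t + ε. Consequently FJN⁺(M,f) = ∅ and FJN(M,f) = FJN⁻(M,f). -/

import Mathlib

open Pointwise Function

/-- The test module `τ(M, f^t) = ⋃_{m ≥ 0} C^m (f^{⌈t q^m⌉} M)`. -/
def testSet {R M : Type*} [CommRing R] [AddCommGroup M] [Module R M]
    (C : M → M) (q : ℕ) (f : R) (t : ℝ) : Set M :=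
  ⋃ m : ℕ, C^[m] '' ((f ^ ⌈t * (q : ℝ) ^ m⌉₊) • (Set.univ : Set M))

/-- The set `FJN⁺(M, f)` of right F-jumping exponents. -/
def FJNplus {R M : Type*} [CommRing R] [AddCommGroup M] [Module R M]
    (C : M → M) (q : ℕ) (f : R) : Set ℝ :=
  {t | 0 ≤ t ∧ ∀ ε : ℝ, 0 < ε → testSet C q f (t + ε) ⊂ testSet C q f t}

/-- The set `FJN⁻(M, f)` of left F-jumping exponents. -/
def FJNminus {R M : Type*} [CommRing R] [AddCommGroup M] [Module R M]
    (C : M → M) (q : ℕ) (f : R) : Set ℝ :=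
  {t | 0 < t ∧ ∀ ε : ℝ, 0 < ε → ε < t → testSet C q f t ⊂ testSet C q f (t - ε)}

/-- The submodule `M_{f!} = Σ_{m ≥ 0} C^m (f M)` of an F-pure `q`-Cartier module `(M, C)`. -/
def Mfbang {R M : Type*} [CommRing R] [AddCommGroup M] [Module R M]
    (C : M → M) (f : R) : Submodule R M :=
  ⨆ m : ℕ, Submodule.span R (C^[m] '' (f • (Set.univ : Set M)))

section Aux
variable {R M : Type*} [CommRing R] [AddCommGroup M] [Module R M]
variable (q : ℕ) (C : M → M)

/-- the image of a submodule under `C` -/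
def Dmap (hCadd : ∀ x y : M, C (x + y) = C x + C y)
    (hCsl : ∀ (a : R) (x : M), C (a ^ q • x) = a • C x)
    (N : Submodule R M) : Submodule R M where
  carrier := C '' N
  add_mem' := by
    rintro _ _ ⟨x, hx, rfl⟩ ⟨y, hy, rfl⟩
    exact ⟨x + y, N.add_mem hx hy, hCadd x y⟩
  zero_mem' := by
    have h0 : C 0 = 0 := by
      have := hCadd 0 0
      simpa using this.symm
    exact ⟨0, N.zero_mem, h0⟩
  smul_mem' := by
    rintro a _ ⟨x, hx, rfl⟩
    exact ⟨a ^ q • x, N.smul_mem _ hx, hCsl a x⟩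

variable (hCadd : ∀ x y : M, C (x + y) = C x + C y)
    (hCsl : ∀ (a : R) (x : M), C (a ^ q • x) = a • C x)

theorem Dmap_coe (N : Submodule R M) : ((Dmap q C hCadd hCsl N : Submodule R M) : Set M) = C '' N := rfl

theorem Dmap_iter_coe (m : ℕ) (N : Submodule R M) :
    (((Dmap q C hCadd hCsl)^[m] N : Submodule R M) : Set M) = C^[m] '' N := by
  induction m generalizing N with
  | zero => simp
  | succ m ih =>
    rw [Function.iterate_succ_apply, ih, Dmap_coe,
      Function.iterate_succ, Set.image_comp]


theorem Dmap_mono : Monotone (Dmap q C hCadd hCsl) := by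
  intro A B h
  intro x hx
  obtain ⟨y, hy, rfl⟩ := hx
  exact ⟨y, h hy, rfl⟩

theorem Dmap_top (hs : Function.Surjective C) :
    Dmap q C hCadd hCsl ⊤ = ⊤ := by
  apply Submodule.eq_top_iff'.2
  intro x
  obtain ⟨y, rfl⟩ := hs x
  exact ⟨y, trivial, rfl⟩

theorem Dmap_smul_q (a : R) (N : Submodule R M) :
    Dmap q C hCadd hCsl ((a ^ q) • N) = a • Dmap q C hCadd hCsl N := by
  apply SetLike.ext
  intro z
  constructor
  · rintro ⟨_, ⟨x, hx, rfl⟩, rfl⟩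
    exact ⟨C x, ⟨x, hx, rfl⟩, (hCsl a x).symm⟩
  · rintro ⟨_, ⟨x, hx, rfl⟩, rfl⟩
    exact ⟨a ^ q • x, Submodule.smul_mem_pointwise_smul x _ N hx, hCsl a x⟩

theorem Dmap_iter_smul (k : ℕ) (a : R) (N : Submodule R M) :
    (Dmap q C hCadd hCsl)^[k] ((a ^ (q ^ k)) • N) = a • (Dmap q C hCadd hCsl)^[k] N := by
  induction k generalizing N with
  | zero => simp
  | succ k ih =>
    rw [Function.iterate_succ_apply, Function.iterate_succ_apply]
    have : a ^ q ^ (k + 1) = (a ^ q ^ k) ^ q := by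
      rw [← pow_mul, pow_succ]
    rw [this, Dmap_smul_q, ih]

theorem Dmap_sup_le (A B : Submodule R M) :
    Dmap q C hCadd hCsl (A ⊔ B) ≤ Dmap q C hCadd hCsl A ⊔ Dmap q C hCadd hCsl B := by
  rintro _ ⟨x, hx, rfl⟩
  obtain ⟨u, hu, v, hv, rfl⟩ := Submodule.mem_sup.1 hx
  rw [hCadd]
  exact Submodule.add_mem_sup ⟨u, hu, rfl⟩ ⟨v, hv, rfl⟩

theorem smul_top_antitone (f : R) {b a : ℕ} (h : b ≤ a) :
    (f ^ a) • (⊤ : Submodule R M) ≤ (f ^ b) • ⊤ := by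
  have : f ^ a = f ^ b * f ^ (a - b) := by rw [← pow_add, Nat.add_sub_cancel' h]
  rw [this, mul_smul]
  rintro _ ⟨x, hx, rfl⟩
  exact Submodule.smul_mem_pointwise_smul x _ _ trivial


theorem Dmap_bot : Dmap q C hCadd hCsl (⊥ : Submodule R M) = ⊥ := by
  apply le_bot_iff.1
  rintro _ ⟨x, hx, rfl⟩
  simp only [Submodule.bot_coe, Set.mem_singleton_iff] at hx
  subst hx
  have h0 : C 0 = 0 := by
    have := hCadd 0 0
    simpa using this.symm
  simp [h0]

theorem Dmap_finsetSup_le (s : Finset ℕ) (X : ℕ → Submodule R M) :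
    Dmap q C hCadd hCsl (s.sup X) ≤ s.sup (fun k => Dmap q C hCadd hCsl (X k)) := by
  induction s using Finset.induction with
  | empty => simp [Dmap_bot q C hCadd hCsl]
  | insert _ _ hnot ihs =>
    rw [Finset.sup_insert, Finset.sup_insert]
    refine le_trans (Dmap_sup_le q C hCadd hCsl _ _) ?_
    exact sup_le_sup le_rfl ihs

theorem Dmap_iter_finsetSup_le (m : ℕ) (s : Finset ℕ) (X : ℕ → Submodule R M) :
    (Dmap q C hCadd hCsl)^[m] (s.sup X) ≤ s.sup (fun k => (Dmap q C hCadd hCsl)^[m] (X k)) := by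
  induction m generalizing X with
  | zero => simp
  | succ m ih =>
    rw [Function.iterate_succ_apply']
    refine le_trans ?_ (Finset.sup_mono_fun (fun k _ =>
      le_of_eq (Function.iterate_succ_apply' (Dmap q C hCadd hCsl) m (X k)).symm))
    exact le_trans (Dmap_mono q C hCadd hCsl (ih X)) (Dmap_finsetSup_le q C hCadd hCsl s _)

theorem smul_finsetSup_le (a : R) (s : Finset ℕ) (X : ℕ → Submodule R M) :
    a • (s.sup X) ≤ s.sup (fun k => a • X k) := by
  induction s using Finset.induction with
  | empty => simp
  | insert _ _ hnot ihs =>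
    rw [Finset.sup_insert, Finset.sup_insert, Submodule.smul_sup']
    exact sup_le_sup le_rfl ihs

variable (f : R)

/-- `cc q t m = ⌈t q^m⌉₊`. -/
noncomputable def cc (t : ℝ) (m : ℕ) : ℕ := ⌈t * (q : ℝ) ^ m⌉₊

/-- `NN t m = C^m (f^{⌈t q^m⌉} M)` as a submodule. -/
noncomputable def NN (t : ℝ) (m : ℕ) : Submodule R M :=
  (Dmap q C hCadd hCsl)^[m] ((f ^ cc q t m) • ⊤)

theorem testSet_eq (t : ℝ) :
    testSet C q f t = ⋃ m, ((NN q C hCadd hCsl f t m : Submodule R M) : Set M) := by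
  unfold testSet NN cc
  refine Set.iUnion_congr fun m => ?_
  rw [Dmap_iter_coe q C hCadd hCsl, Submodule.coe_pointwise_smul, Submodule.top_coe]

theorem NN_mono_m (hq1 : 1 ≤ q) (hs : Function.Surjective C) (t : ℝ) :
    Monotone (NN q C hCadd hCsl f t) := by
  apply monotone_nat_of_le_succ
  intro m
  unfold NN
  rw [Function.iterate_succ_apply]
  refine Monotone.iterate (Dmap_mono q C hCadd hCsl) m ?_
  have h1 : cc q t (m + 1) ≤ q * cc q t m := by
    apply Nat.ceil_le.2
    push_cast
    calc t * (q:ℝ) ^ (m+1) = (t * (q:ℝ) ^ m) * q := by ring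
      _ ≤ (cc q t m : ℝ) * q := by
          exact mul_le_mul_of_nonneg_right (Nat.le_ceil _) (by positivity)
      _ = (q:ℝ) * (cc q t m) := by ring
  calc (f ^ cc q t m) • (⊤ : Submodule R M)
      = (f ^ cc q t m) • Dmap q C hCadd hCsl ⊤ := by rw [Dmap_top q C hCadd hCsl hs]
    _ = Dmap q C hCadd hCsl (((f ^ cc q t m) ^ q) • ⊤) := (Dmap_smul_q q C hCadd hCsl _ _).symm
    _ = Dmap q C hCadd hCsl ((f ^ (q * cc q t m)) • ⊤) := by rw [← pow_mul, mul_comm]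
    _ ≤ Dmap q C hCadd hCsl ((f ^ cc q t (m+1)) • ⊤) :=
        Dmap_mono q C hCadd hCsl (smul_top_antitone f h1)

theorem NN_anti_t {t s : ℝ} (h : t ≤ s) (m : ℕ) :
    NN q C hCadd hCsl f s m ≤ NN q C hCadd hCsl f t m := by
  unfold NN
  refine Monotone.iterate (Dmap_mono q C hCadd hCsl) m ?_
  apply smul_top_antitone
  exact Nat.ceil_mono (mul_le_mul_of_nonneg_right h (by positivity))

/-- `PP m = C^m(fM)` -/
noncomputable def PP (m : ℕ) : Submodule R M := (Dmap q C hCadd hCsl)^[m] (f • ⊤)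

theorem Mfbang_eq : Mfbang C f = ⨆ m, PP q C hCadd hCsl f m := by
  unfold Mfbang PP
  congr 1
  funext m
  rw [show f • (Set.univ : Set M) = ((f • (⊤ : Submodule R M) : Submodule R M) : Set M) by
        rw [Submodule.coe_pointwise_smul, Submodule.top_coe],
    ← Dmap_iter_coe q C hCadd hCsl, Submodule.span_eq]

theorem smul_PP (n k : ℕ) :
    (f ^ n) • PP q C hCadd hCsl f k
      = (Dmap q C hCadd hCsl)^[k] ((f ^ (n * q ^ k + 1)) • ⊤) := by
  unfold PP
  rw [← Dmap_iter_smul q C hCadd hCsl k (f ^ n) (f • ⊤)]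
  congr 1
  rw [smul_smul, ← pow_mul, pow_succ, pow_mul]

theorem key_le (hq1 : 1 ≤ q) (hs : Function.Surjective C) {K : ℕ}
    (hK : (Finset.range (K+1)).sup (PP q C hCadd hCsl f) = ⊤) (t s : ℝ) (m₀ : ℕ)
    (hcond : ∀ k, k ≤ K → cc q s (m₀ + k) ≤ cc q t m₀ * q ^ k + 1) :
    NN q C hCadd hCsl f t m₀ ≤ NN q C hCadd hCsl f s (m₀ + K) := by
  set D := Dmap q C hCadd hCsl with hD
  have step1 : NN q C hCadd hCsl f t m₀
      ≤ (Finset.range (K+1)).sup (fun k => D^[m₀ + k] ((f ^ (cc q t m₀ * q ^ k + 1)) • ⊤)) := by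
    unfold NN
    conv_lhs => rw [show (⊤ : Submodule R M) = (Finset.range (K+1)).sup (PP q C hCadd hCsl f) from hK.symm]
    refine le_trans (Monotone.iterate (Dmap_mono q C hCadd hCsl) m₀
      (smul_finsetSup_le _ _ _)) ?_
    refine le_trans (Dmap_iter_finsetSup_le q C hCadd hCsl m₀ _ _) ?_
    apply Finset.sup_le
    intro k hk
    rw [smul_PP q C hCadd hCsl f (cc q t m₀) k, ← Function.iterate_add_apply]
    exact Finset.le_sup (f := fun k => (Dmap q C hCadd hCsl)^[m₀ + k] ((f ^ (cc q t m₀ * q ^ k + 1)) • ⊤)) hk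
  refine le_trans step1 ?_
  apply Finset.sup_le
  intro k hk
  rw [Finset.mem_range, Nat.lt_succ_iff] at hk
  have h1 : D^[m₀ + k] ((f ^ (cc q t m₀ * q ^ k + 1)) • ⊤) ≤ NN q C hCadd hCsl f s (m₀ + k) := by
    unfold NN
    exact Monotone.iterate (Dmap_mono q C hCadd hCsl) _
      (smul_top_antitone f (hcond k hk))
  exact le_trans h1 (NN_mono_m q C hCadd hCsl f hq1 hs s (by omega))

end Aux

theorem stmt16 {R M : Type*} [CommRing R] [AddCommGroup M] [Module R M]
    (p : ℕ) [Fact p.Prime] [CharP R p] [IsNoetherianRing R]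
    (hFF : (frobenius R p).Finite)
    (e q : ℕ) (he : 1 ≤ e) (hq : q = p ^ e)
    (C : M → M) (hCadd : ∀ x y : M, C (x + y) = C x + C y)
    (hCsl : ∀ (a : R) (x : M), C (a ^ q • x) = a • C x)
    [Module.Finite R M] (hFpure : Function.Surjective C)
    (f : R) (hMf : Mfbang C f = ⊤) :
    -- right continuity of the test module filtration
    (∀ t : ℝ, 0 ≤ t → ∃ ε : ℝ, 0 < ε ∧
      ∀ s : ℝ, t ≤ s → s < t + ε → testSet C q f s = testSet C q f t) ∧
    -- consequently `FJN⁺(M,f) = ∅` and `FJN(M,f) = FJN⁻(M,f)`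
    (FJNplus C q f = ∅ ∧ FJNplus C q f ∪ FJNminus C q f = FJNminus C q f) := by
  have hq1 : 1 ≤ q := by
    have hp : 2 ≤ p := (Fact.out : p.Prime).two_le
    subst hq
    calc 1 ≤ p := by omega
      _ ≤ p ^ e := Nat.le_self_pow (by omega) p
  have hqR : (1 : ℝ) ≤ (q : ℝ) := by exact_mod_cast hq1
  have hqR0 : (0 : ℝ) < (q : ℝ) := by linarith
  have hNoeth : IsNoetherian R M := isNoetherian_of_isNoetherianRing_of_finite R M
  -- Finitely many `PP` suffice
  have hQmono : Monotone (fun K => (Finset.range (K+1)).sup (PP q C hCadd hCsl f)) :=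
    fun a b hab => Finset.sup_mono (Finset.range_mono (by omega : a + 1 ≤ b + 1))
  obtain ⟨K0, hK0⟩ := monotone_stabilizes_iff_noetherian.2 hNoeth
    ⟨fun K => (Finset.range (K+1)).sup (PP q C hCadd hCsl f), hQmono⟩
  have hKtop : (Finset.range (K0+1)).sup (PP q C hCadd hCsl f) = ⊤ := by
    have h1 : ∀ m, PP q C hCadd hCsl f m ≤ (Finset.range (K0+1)).sup (PP q C hCadd hCsl f) := by
      intro m
      have hm : PP q C hCadd hCsl f m ≤ (Finset.range (m+1)).sup (PP q C hCadd hCsl f) :=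
        Finset.le_sup (Finset.mem_range.2 (by omega))
      have h2 := hK0 (max m K0) (le_max_right _ _)
      have h3 : (Finset.range (m+1)).sup (PP q C hCadd hCsl f)
          ≤ (Finset.range (max m K0 + 1)).sup (PP q C hCadd hCsl f) :=
        hQmono (le_max_left _ _)
      exact hm.trans (h3.trans (le_of_eq h2.symm))
    have := hMf
    rw [Mfbang_eq q C hCadd hCsl f] at this
    exact top_le_iff.1 (this ▸ iSup_le h1)
  -- Part 1
  have part1 : ∀ t : ℝ, 0 ≤ t → ∃ ε : ℝ, 0 < ε ∧
      ∀ s : ℝ, t ≤ s → s < t + ε → testSet C q f s = testSet C q f t := by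
    intro t ht
    obtain ⟨m₀, hm₀⟩ := monotone_stabilizes_iff_noetherian.2 hNoeth
      ⟨NN q C hCadd hCsl f t, NN_mono_m q C hCadd hCsl f hq1 hFpure t⟩
    have htestt : testSet C q f t = ((NN q C hCadd hCsl f t m₀ : Submodule R M) : Set M) := by
      rw [testSet_eq q C hCadd hCsl f t]
      apply Set.Subset.antisymm
      · apply Set.iUnion_subset
        intro m
        have h1 : NN q C hCadd hCsl f t m ≤ NN q C hCadd hCsl f t (max m m₀) :=
          NN_mono_m q C hCadd hCsl f hq1 hFpure t (le_max_left _ _)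
        have h2 : NN q C hCadd hCsl f t m₀ = NN q C hCadd hCsl f t (max m m₀) :=
          hm₀ (max m m₀) (le_max_right _ _)
        exact fun x hx => (h2 ▸ h1) hx
      · exact Set.subset_iUnion (fun m => ((NN q C hCadd hCsl f t m : Submodule R M) : Set M)) m₀
    refine ⟨1 / (q : ℝ) ^ (m₀ + K0), by positivity, fun s hts hs => ?_⟩
    apply Set.Subset.antisymm
    · rw [testSet_eq q C hCadd hCsl f t, testSet_eq q C hCadd hCsl f s]
      exact Set.iUnion_mono fun m => NN_anti_t q C hCadd hCsl f hts m
    · rw [htestt]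
      have hcond : ∀ k, k ≤ K0 → cc q s (m₀ + k) ≤ cc q t m₀ * q ^ k + 1 := by
        intro k hk
        apply Nat.ceil_le.2
        push_cast
        have e1 : s * (q:ℝ) ^ (m₀ + k) < (t + 1 / (q:ℝ) ^ (m₀ + K0)) * (q:ℝ) ^ (m₀ + k) :=
          mul_lt_mul_of_pos_right hs (by positivity)
        have e2 : t * (q:ℝ) ^ (m₀ + k) ≤ (cc q t m₀ : ℝ) * (q:ℝ) ^ k := by
          rw [pow_add]
          rw [show t * ((q:ℝ) ^ m₀ * (q:ℝ) ^ k) = (t * (q:ℝ) ^ m₀) * (q:ℝ) ^ k by ring]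
          exact mul_le_mul_of_nonneg_right (Nat.le_ceil _) (by positivity)
        have e3 : (1 / (q:ℝ) ^ (m₀ + K0)) * (q:ℝ) ^ (m₀ + k) ≤ 1 := by
          rw [div_mul_eq_mul_div, one_mul, div_le_one (by positivity)]
          exact pow_le_pow_right₀ hqR (by omega)
        nlinarith [e1, e2, e3]
      have hkey := key_le q C hCadd hCsl f hq1 hFpure hKtop t s m₀ hcond
      refine Set.Subset.trans (fun x hx => hkey hx) ?_
      rw [testSet_eq q C hCadd hCsl f s]
      exact Set.subset_iUnion (fun m => ((NN q C hCadd hCsl f s m : Submodule R M) : Set M)) (m₀ + K0)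
  refine ⟨part1, ?_, ?_⟩
  · ext t
    simp only [Set.mem_empty_iff_false, iff_false, FJNplus, Set.mem_setOf_eq, not_and]
    intro ht hstrict
    obtain ⟨ε, hε, hconst⟩ := part1 t ht
    have h1 := hstrict (ε / 2) (by positivity)
    rw [hconst (t + ε / 2) (by linarith) (by linarith)] at h1
    exact (ssubset_irrefl _) h1
  · have : FJNplus C q f = ∅ := by
      ext t
      simp only [Set.mem_empty_iff_false, iff_false, FJNplus, Set.mem_setOf_eq, not_and]
      intro ht hstrict
      obtain ⟨ε, hε, hconst⟩ := part1 t ht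
      have h1 := hstrict (ε / 2) (by positivity)
      rw [hconst (t + ε / 2) (by linarith) (by linarith)] at h1
      exact (ssubset_irrefl _) h1
    rw [this, Set.empty_union]
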